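/- Let σ, ω be locally finite positive Borel measures on ℝⁿ, 0 ≤ α < n, 0 < δ, and suppose the offset Muckenhoupt constant A₂^α := sup over pairs of disjoint neighbouring cubes (Q,Q') of equal side length of (σ(Q)/|Q|^{1-α/n})(ω(Q')/|Q|^{1-α/n}) is finite. For k ∈ ℤ define the annular averaging operator A_α^k(fσ)(x) = |B(x,2^{-k})|^{α/n - 1} ∫_{B(x,2^{-k}) ∖ B(x,2^{-k-1})} |f| dσ. Then ‖A_α^k(fσ)‖_{L²(ω)} ≤ C √(A₂^α) ‖f‖_{L²(σ)} with C = C(n,α) independent of k. -/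

import Mathlib

open MeasureTheory
open scoped ENNReal

/-- The dyadic cube of generation `k` (side length `2^{-k}`) with lower corner `2^{-k} z`. -/
def dyadicCube (n : ℕ) (k : ℤ) (z : Fin n → ℤ) : Set (EuclideanSpace ℝ (Fin n)) :=
  {x | ∀ i, (z i : ℝ) * (2 : ℝ) ^ (-k) ≤ x i ∧ x i < ((z i : ℝ) + 1) * (2 : ℝ) ^ (-k)}

/-- The concentric triple `3Q` of the dyadic cube `Q = dyadicCube n k z`. -/
def tripleDyadicCube (n : ℕ) (k : ℤ) (z : Fin n → ℤ) : Set (EuclideanSpace ℝ (Fin n)) :=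
  {x | ∀ i, ((z i : ℝ) - 1) * (2 : ℝ) ^ (-k) ≤ x i ∧ x i < ((z i : ℝ) + 2) * (2 : ℝ) ^ (-k)}

/-- Two dyadic cubes of the same generation are *neighbours* if each is contained
in the punctured triple of the other. -/
def NeighbourCubes (n : ℕ) (k : ℤ) (z z' : Fin n → ℤ) : Prop :=
  dyadicCube n k z ⊆ tripleDyadicCube n k z' \ dyadicCube n k z' ∧
  dyadicCube n k z' ⊆ tripleDyadicCube n k z \ dyadicCube n k z

/-- The annular `α`-averaging operator
`A_α^k(fσ)(x) = |B(x,2^{-k})|^{α/n-1} ∫_{B(x,2^{-k}) ∖ B(x,2^{-k-1})} f dσ`. -/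
noncomputable def annularOp {n : ℕ} (σ : Measure (EuclideanSpace ℝ (Fin n))) (α : ℝ) (k : ℤ)
    (f : EuclideanSpace ℝ (Fin n) → ℝ≥0∞) (x : EuclideanSpace ℝ (Fin n)) : ℝ≥0∞ :=
  (volume (Metric.ball x ((2 : ℝ) ^ (-k)))) ^ (α / (n : ℝ) - 1) *
    ∫⁻ y in Metric.ball x ((2 : ℝ) ^ (-k)) \ Metric.ball x ((2 : ℝ) ^ (-k) / 2), f y ∂σ

lemma floor_dist_le {a b : ℝ} (h : |a - b| ≤ 1) : |⌊a⌋ - ⌊b⌋| ≤ 1 := by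
  rw [abs_le] at h ⊢
  constructor
  · have : b ≤ a + 1 := by linarith
    have := Int.floor_le_floor (R := ℝ) this
    simp [Int.floor_add_one] at this; omega
  · have : a ≤ b + 1 := by linarith
    have := Int.floor_le_floor (R := ℝ) this
    simp [Int.floor_add_one] at this; omega

lemma floor_double {a b : ℝ} (h : ⌊a⌋ = ⌊b⌋) : |⌊2*a⌋ - ⌊2*b⌋| ≤ 1 := by
  have h1 : (2*⌊a⌋ : ℤ) ≤ ⌊2*a⌋ := by
    have := Int.floor_le a
    have : ((2*⌊a⌋ : ℤ) : ℝ) ≤ 2*a := by push_cast; linarith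
    exact Int.le_floor.2 this
  have h2 : ⌊2*a⌋ ≤ 2*⌊a⌋ + 1 := by
    have := Int.lt_floor_add_one a
    have : 2*a < ((2*⌊a⌋+2 : ℤ) : ℝ) := by push_cast; linarith
    have := Int.floor_lt.2 this
    omega
  have h3 : (2*⌊b⌋ : ℤ) ≤ ⌊2*b⌋ := by
    have := Int.floor_le b
    have : ((2*⌊b⌋ : ℤ) : ℝ) ≤ 2*b := by push_cast; linarith
    exact Int.le_floor.2 this
  have h4 : ⌊2*b⌋ ≤ 2*⌊b⌋ + 1 := by
    have := Int.lt_floor_add_one b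
    have : 2*b < ((2*⌊b⌋+2 : ℤ) : ℝ) := by push_cast; linarith
    have := Int.floor_lt.2 this
    omega
  rw [abs_le]; omega

lemma floor_eq_dist_lt {a b : ℝ} (h : ⌊a⌋ = ⌊b⌋) : |a - b| < 1 := by
  have h1 := Int.floor_le a
  have h2 := Int.lt_floor_add_one a
  have h3 := Int.floor_le b
  have h4 := Int.lt_floor_add_one b
  rw [h] at h1 h2
  rw [abs_lt]; constructor <;> linarith

noncomputable def zidx {n : ℕ} (j : ℤ) (x : EuclideanSpace ℝ (Fin n)) : Fin n → ℤ :=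
  fun i => ⌊x i * 2 ^ j⌋

lemma mem_dyadicCube_iff {n : ℕ} {j : ℤ} {z : Fin n → ℤ} {x : EuclideanSpace ℝ (Fin n)} :
    x ∈ dyadicCube n j z ↔ ∀ i, (z i : ℝ) ≤ x i * 2 ^ j ∧ x i * 2 ^ j < z i + 1 := by
  have h2 : (0:ℝ) < 2 ^ j := by positivity
  simp only [dyadicCube, Set.mem_setOf_eq, zpow_neg]
  refine forall_congr' fun i => and_congr ?_ ?_
  · rw [← div_eq_mul_inv, div_le_iff₀ h2]
  · rw [← div_eq_mul_inv, lt_div_iff₀ h2]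

lemma mem_dyadicCube_zidx {n : ℕ} (j : ℤ) (x : EuclideanSpace ℝ (Fin n)) :
    x ∈ dyadicCube n j (zidx j x) := by
  rw [mem_dyadicCube_iff]
  exact fun i => ⟨Int.floor_le _, by push_cast; exact Int.lt_floor_add_one _⟩

lemma eq_zidx_of_mem {n : ℕ} {j : ℤ} {z : Fin n → ℤ} {x : EuclideanSpace ℝ (Fin n)}
    (h : x ∈ dyadicCube n j z) : z = zidx j x := by
  rw [mem_dyadicCube_iff] at h
  funext i
  exact ((Int.floor_eq_iff ).2 ⟨(h i).1, by push_cast; exact (h i).2⟩).symm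

lemma dyadicCube_disjoint {n : ℕ} {j : ℤ} {z z' : Fin n → ℤ} (h : z ≠ z') :
    Disjoint (dyadicCube n j z) (dyadicCube n j z') := by
  rw [Set.disjoint_left]
  intro x hx hx'
  exact h ((eq_zidx_of_mem hx).trans (eq_zidx_of_mem hx').symm)

lemma cube_subset_triple {n : ℕ} {j : ℤ} {z z' : Fin n → ℤ}
    (h : ∀ i, |z i - z' i| ≤ 1) : dyadicCube n j z ⊆ tripleDyadicCube n j z' := by
  intro x hx i
  have hi := hx i
  have h2 : (0:ℝ) < (2:ℝ) ^ (-j) := by positivity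
  have hb := h i
  rw [abs_le] at hb
  constructor
  · calc ((z' i : ℝ) - 1) * (2:ℝ) ^ (-j) ≤ (z i : ℝ) * (2:ℝ) ^ (-j) := by
          apply mul_le_mul_of_nonneg_right _ h2.le
          have : (z' i : ℝ) - 1 ≤ z i := by exact_mod_cast (by omega : (z' i : ℤ) - 1 ≤ z i)
          linarith
        _ ≤ x i := hi.1
  · calc x i < ((z i : ℝ) + 1) * (2:ℝ) ^ (-j) := hi.2
        _ ≤ ((z' i : ℝ) + 2) * (2:ℝ) ^ (-j) := by
          apply mul_le_mul_of_nonneg_right _ h2.le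
          have : (z i : ℝ) + 1 ≤ z' i + 2 := by exact_mod_cast (by omega : (z i : ℤ) + 1 ≤ z' i + 2)
          linarith

lemma neighbourCubes_of_close {n : ℕ} {j : ℤ} {z z' : Fin n → ℤ} (hne : z ≠ z')
    (h : ∀ i, |z i - z' i| ≤ 1) : NeighbourCubes n j z z' := by
  have h' : ∀ i, |z' i - z i| ≤ 1 := fun i => by rw [abs_sub_comm]; exact h i
  refine ⟨fun x hx => ⟨cube_subset_triple h hx, fun hx' => hne ((eq_zidx_of_mem hx).trans (eq_zidx_of_mem hx').symm)⟩,
    fun x hx => ⟨cube_subset_triple h' hx, fun hx' => hne ((eq_zidx_of_mem hx').trans (eq_zidx_of_mem hx).symm)⟩⟩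

lemma measurableSet_dyadicCube {n : ℕ} (j : ℤ) (z : Fin n → ℤ) :
    MeasurableSet (dyadicCube n j z) := by
  have : dyadicCube n j z = ⋂ i, (fun x : EuclideanSpace ℝ (Fin n) => x i) ⁻¹'
      (Set.Ico ((z i : ℝ) * (2:ℝ)^(-j)) (((z i : ℝ)+1) * (2:ℝ)^(-j))) := by
    ext x; simp [dyadicCube, Set.mem_iInter]
  rw [this]
  exact MeasurableSet.iInter fun i => ((continuous_apply i).comp (PiLp.continuous_ofLp 2 _)).measurable measurableSet_Ico

lemma measurableSet_tripleDyadicCube {n : ℕ} (j : ℤ) (z : Fin n → ℤ) :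
    MeasurableSet (tripleDyadicCube n j z) := by
  have : tripleDyadicCube n j z = ⋂ i, (fun x : EuclideanSpace ℝ (Fin n) => x i) ⁻¹'
      (Set.Ico (((z i : ℝ) - 1) * (2:ℝ)^(-j)) (((z i : ℝ)+2) * (2:ℝ)^(-j))) := by
    ext x; simp [tripleDyadicCube, Set.mem_iInter]
  rw [this]
  exact MeasurableSet.iInter fun i => ((continuous_apply i).comp (PiLp.continuous_ofLp 2 _)).measurable measurableSet_Ico

/-- key covering lemma -/

lemma covering {n : ℕ} (hn : 0 < n) (k : ℤ) (x y : EuclideanSpace ℝ (Fin n))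
    (h1 : (2:ℝ) ^ (-k) / 2 ≤ dist y x) (h2 : dist y x < (2:ℝ) ^ (-k)) :
    ∃ j ∈ Finset.Icc (k-1) (k+n+1),
      zidx j y ≠ zidx j x ∧ ∀ i, |zidx j y i - zidx j x i| ≤ 1 := by
  classical
  -- the set of good generations
  set S := (Finset.Icc (k-1) (k+(n:ℤ)+1)).filter
    (fun j => ∀ i, |zidx j y i - zidx j x i| ≤ 1) with hS
  have coord_le : ∀ i, |y i - x i| ≤ dist y x := by
    intro i
    have : dist (y i) (x i) ≤ dist y x := by
      have := EuclideanSpace.dist_eq y x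
      have hle : dist (y i) (x i) ^ 2 ≤ ∑ i', dist (y i') (x i') ^ 2 :=
        Finset.single_le_sum (f := fun i' => dist (y i') (x i') ^ 2)
          (fun _ _ => sq_nonneg _) (Finset.mem_univ i)
      nlinarith [Real.sq_sqrt (Finset.sum_nonneg (fun i' (_ : i' ∈ Finset.univ) => sq_nonneg (dist (y i') (x i')))), dist_nonneg (x := y i) (y := x i), Real.sqrt_nonneg (∑ i', dist (y i') (x i') ^ 2)]
    simpa [Real.dist_eq] using this
  have hbase : (k-1) ∈ S := by
    rw [hS, Finset.mem_filter]
    refine ⟨by rw [Finset.mem_Icc]; omega, fun i => floor_dist_le ?_⟩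
    have h2pos : (0:ℝ) < (2:ℝ) ^ (k-1) := by positivity
    have : |y i - x i| * (2:ℝ)^(k-1) ≤ 1 := by
      have hc := coord_le i
      have h2k : dist y x * (2:ℝ)^(k-1) < 1 := by
        have : (2:ℝ) ^ (-k) * (2:ℝ)^(k-1) = 2⁻¹ := by
          rw [← zpow_add₀ (by norm_num : (2:ℝ) ≠ 0), show -k + (k-1) = -1 by ring]
          norm_num
        nlinarith [dist_nonneg (x := y) (y := x)]
      nlinarith [abs_nonneg (y i - x i)]
    calc |y i * 2^(k-1) - x i * 2^(k-1)| = |y i - x i| * (2:ℝ)^(k-1) := by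
          rw [← sub_mul, abs_mul, abs_of_pos h2pos]
      _ ≤ 1 := this
  have hSne : S.Nonempty := ⟨_, hbase⟩
  set J := S.max' hSne with hJ
  have hJS : J ∈ S := S.max'_mem hSne
  rw [hS, Finset.mem_filter, Finset.mem_Icc] at hJS
  obtain ⟨⟨hJ1, hJ2⟩, hJP⟩ := hJS
  refine ⟨J, by rw [Finset.mem_Icc]; omega, ?_, hJP⟩
  -- remains: zidx J y ≠ zidx J x
  by_cases hcase : J = k + n + 1
  · -- distance forces floors to differ at finest scale
    obtain ⟨i, hi⟩ : ∃ i, ((2:ℝ)^(-(k+(n:ℤ)+1)))^2 ≤ (y i - x i)^2 := by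
      by_contra hcon
      push_neg at hcon
      have hsum : ∑ i, dist (y i) (x i) ^ 2 < n * ((2:ℝ)^(-(k+(n:ℤ)+1)))^2 := by
        calc ∑ i, dist (y i) (x i) ^ 2 < ∑ _i : Fin n, ((2:ℝ)^(-(k+(n:ℤ)+1)))^2 := by
              apply Finset.sum_lt_sum_of_nonempty
              · exact Finset.univ_nonempty_iff.mpr ⟨⟨0, hn⟩⟩
              · intro i _
                have := hcon i
                simpa [Real.dist_eq, sq_abs] using this
          _ = n * ((2:ℝ)^(-(k+(n:ℤ)+1)))^2 := by simp [Finset.sum_const, nsmul_eq_mul]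
      -- but dist ≥ 2^{-k}/2 and n * (2^{-k-n-1})² ≤ (2^{-k}/2)²
      have hd2 : ((2:ℝ)^(-k)/2)^2 ≤ ∑ i, dist (y i) (x i) ^ 2 := by
        have := EuclideanSpace.dist_eq y x
        nlinarith [Real.sq_sqrt (Finset.sum_nonneg (fun i' (_ : i' ∈ Finset.univ) => sq_nonneg (dist (y i') (x i')))), (by positivity : (0:ℝ) < (2:ℝ)^(-k)/2)]
      have hcmp : (n:ℝ) * ((2:ℝ)^(-(k+(n:ℤ)+1)))^2 ≤ ((2:ℝ)^(-k)/2)^2 := by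
        have hz : (2:ℝ)^(-(k+(n:ℤ)+1)) = (2:ℝ)^(-k) / 2 / 2^(n:ℤ) := by
          rw [div_div, eq_div_iff (by positivity)]
          rw [show (2:ℝ) * 2^(n:ℤ) = 2^((n:ℤ)+1) by
            rw [zpow_add₀ (by norm_num : (2:ℝ) ≠ 0)]; ring]
          rw [← zpow_add₀ (by norm_num : (2:ℝ) ≠ 0)]
          congr 1; ring
        have hn4 : (n:ℝ) ≤ ((2:ℝ)^(n:ℤ))^2 := by
          have h1 : ((2:ℝ)^(n:ℤ)) = 2^(n:ℕ) := by rw [zpow_natCast]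
          rw [h1]
          have h2 : (n:ℝ) ≤ 2^(n:ℕ) := by exact_mod_cast Nat.le_of_lt (Nat.lt_two_pow_self (n := n))
          have h3 : (1:ℝ) ≤ 2^(n:ℕ) := one_le_pow₀ (by norm_num)
          nlinarith
        rw [hz]
        have hp : (0:ℝ) < (2:ℝ)^(n:ℤ) := by positivity
        have hs : (0:ℝ) < (2:ℝ)^(-k)/2 := by positivity
        rw [div_pow, ← mul_div_assoc, div_le_iff₀ (by positivity)]
        nlinarith [sq_nonneg ((2:ℝ)^(-k)/2)]
      linarith
    -- conclude floors differ in coordinate i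
    intro heq
    have := congrFun heq i
    simp only [zidx] at this
    have hlt := floor_eq_dist_lt this
    have : |y i * 2^J - x i * 2^J| = |y i - x i| * (2:ℝ)^J := by
      rw [← sub_mul, abs_mul, abs_of_pos (show (0:ℝ) < (2:ℝ)^J by positivity)]
    rw [this] at hlt
    have h2J : (0:ℝ) < (2:ℝ)^J := by positivity
    have habs : (2:ℝ)^(-(k+(n:ℤ)+1)) ≤ |y i - x i| := by
      nlinarith [abs_nonneg (y i - x i), sq_abs (y i - x i), (by positivity : (0:ℝ) < (2:ℝ)^(-(k+(n:ℤ)+1)))]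
    have : (1:ℝ) ≤ |y i - x i| * (2:ℝ)^J := by
      have : (2:ℝ)^(-(k+(n:ℤ)+1)) * (2:ℝ)^J = 1 := by
        rw [← zpow_add₀ (by norm_num : (2:ℝ) ≠ 0)]
        rw [hcase]; ring_nf; simp
      nlinarith
    linarith
  · -- J < k+n+1 : maximality gives failure at J+1
    have hJ1mem : J + 1 ∈ Finset.Icc (k-1) (k+(n:ℤ)+1) := by rw [Finset.mem_Icc]; omega
    have hnot : ¬ (∀ i, |zidx (J+1) y i - zidx (J+1) x i| ≤ 1) := by
      intro hP
      have : J + 1 ∈ S := by rw [hS, Finset.mem_filter]; exact ⟨hJ1mem, hP⟩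
      have := S.le_max' _ this
      omega
    push_neg at hnot
    obtain ⟨i, hi⟩ := hnot
    intro heq
    have := congrFun heq i
    simp only [zidx] at this
    have hd := floor_double this
    have harg : ∀ t : ℝ, 2 * (t * (2:ℝ)^J) = t * (2:ℝ)^(J+1) := by
      intro t
      rw [zpow_add₀ (by norm_num : (2:ℝ) ≠ 0)]; ring
    rw [harg, harg] at hd
    simp only [zidx] at hi
    omega

lemma ennreal_mul_le_sq_add {a b : ℝ≥0∞} : a * b ≤ a^2 + b^2 := by
  rcases le_total a b with h | h
  · calc a * b ≤ b * b := mul_le_mul_left h b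
      _ = b^2 := (sq b).symm
      _ ≤ a^2 + b^2 := le_add_self
  · calc a * b ≤ a * a := mul_le_mul_right h a
      _ = a^2 := (sq a).symm
      _ ≤ a^2 + b^2 := le_self_add

lemma ennreal_sq_sum_le {ι : Type*} (s : Finset ι) (a : ι → ℝ≥0∞) :
    (∑ i ∈ s, a i)^2 ≤ (2 * s.card) * ∑ i ∈ s, (a i)^2 := by
  rw [sq, Finset.sum_mul_sum]
  calc ∑ i ∈ s, ∑ j ∈ s, a i * a j ≤ ∑ i ∈ s, ∑ j ∈ s, ((a i)^2 + (a j)^2) :=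
        Finset.sum_le_sum fun i _ => Finset.sum_le_sum fun j _ => ennreal_mul_le_sq_add
    _ = (2 * s.card) * ∑ i ∈ s, (a i)^2 := by
        have h1 : ∀ i ∈ s, ∑ j ∈ s, ((a i)^2 + (a j)^2)
            = (s.card : ℝ≥0∞) * (a i)^2 + ∑ j ∈ s, (a j)^2 := fun i _ => by
          rw [Finset.sum_add_distrib, Finset.sum_const, nsmul_eq_mul]
        rw [Finset.sum_congr rfl h1, Finset.sum_add_distrib, ← Finset.mul_sum,
          Finset.sum_const, nsmul_eq_mul]
        ring

lemma lintegral_sq_le_measure_mul {α : Type*} [MeasurableSpace α] (μ : Measure α)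
    {s : Set α} (hs : MeasurableSet s) {f : α → ℝ≥0∞} (hf : Measurable f) :
    (∫⁻ x in s, f x ∂μ)^2 ≤ μ s * ∫⁻ x in s, (f x)^2 ∂μ := by
  have hconj : Real.HolderConjugate 2 2 := by constructor <;> norm_num
  have key := ENNReal.lintegral_mul_le_Lp_mul_Lq (μ.restrict s) hconj
    hf.aemeasurable (aemeasurable_const (b := (1:ℝ≥0∞)))
  simp only [Pi.mul_apply, mul_one, ENNReal.one_rpow, lintegral_const, one_mul,
    Measure.restrict_apply_univ] at key
  calc (∫⁻ x in s, f x ∂μ)^2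
      ≤ ((∫⁻ x in s, f x ^ (2:ℝ) ∂μ) ^ (1/(2:ℝ)) * (μ s) ^ (1/(2:ℝ)))^2 :=
        pow_le_pow_left' key 2
    _ = μ s * ∫⁻ x in s, (f x)^2 ∂μ := by
        rw [mul_pow, ← ENNReal.rpow_natCast ((∫⁻ x in s, f x ^ (2:ℝ) ∂μ) ^ (1/(2:ℝ))) 2,
          ← ENNReal.rpow_natCast ((μ s) ^ (1/(2:ℝ))) 2,
          ← ENNReal.rpow_mul, ← ENNReal.rpow_mul]
        norm_num
        rw [mul_comm]

lemma mem_triple_iff {n : ℕ} {j : ℤ} {z' : Fin n → ℤ} {x : EuclideanSpace ℝ (Fin n)} :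
    x ∈ tripleDyadicCube n j z' ↔ ∀ i, zidx j x i - 1 ≤ z' i ∧ z' i ≤ zidx j x i + 1 := by
  have h2 : (0:ℝ) < (2:ℝ) ^ j := by positivity
  simp only [tripleDyadicCube, Set.mem_setOf_eq, zpow_neg]
  refine forall_congr' fun i => ?_
  rw [← div_eq_mul_inv, div_le_iff₀ h2, ← div_eq_mul_inv, lt_div_iff₀ h2]
  constructor
  · rintro ⟨ha, hb⟩
    have ha' : ((z' i - 1 : ℤ) : ℝ) ≤ x i * 2 ^ j := by push_cast; linarith
    have hb' : x i * 2 ^ j < ((z' i + 2 : ℤ) : ℝ) := by push_cast; linarith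
    have h1 := Int.le_floor.2 ha'
    have h2' := Int.floor_lt.2 hb'
    simp only [zidx]; omega
  · rintro ⟨ha, hb⟩
    have h1 := Int.floor_le (x i * 2 ^ j)
    have h2' := Int.lt_floor_add_one (x i * 2 ^ j)
    simp only [zidx] at ha hb
    constructor
    · have : ((z' i : ℝ) - 1) ≤ (⌊x i * 2 ^ j⌋ : ℝ) := by
        have : (z' i : ℤ) - 1 ≤ ⌊x i * 2 ^ j⌋ := by omega
        exact_mod_cast this
      linarith
    · have : ((⌊x i * 2 ^ j⌋ : ℝ) + 1) ≤ (z' i : ℝ) + 2 := by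
        have : (⌊x i * 2 ^ j⌋ : ℤ) + 1 ≤ z' i + 2 := by omega
        exact_mod_cast this
      linarith

lemma tsum_triple_lintegral_le {n : ℕ} (j : ℤ) (σ : Measure (EuclideanSpace ℝ (Fin n)))
    (g : EuclideanSpace ℝ (Fin n) → ℝ≥0∞) (hg : Measurable g) :
    ∑' z' : Fin n → ℤ, ∫⁻ x in tripleDyadicCube n j z', g x ∂σ
      ≤ 3^n * ∫⁻ x, g x ∂σ := by
  have hmeas : ∀ z' : Fin n → ℤ, AEMeasurable
      ((tripleDyadicCube n j z').indicator g) σ :=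
    fun z' => (hg.indicator (measurableSet_tripleDyadicCube j z')).aemeasurable
  calc ∑' z' : Fin n → ℤ, ∫⁻ x in tripleDyadicCube n j z', g x ∂σ
      = ∑' z' : Fin n → ℤ, ∫⁻ x, (tripleDyadicCube n j z').indicator g x ∂σ := by
        refine tsum_congr fun z' => ?_
        rw [lintegral_indicator (measurableSet_tripleDyadicCube j z')]
    _ = ∫⁻ x, ∑' z' : Fin n → ℤ, (tripleDyadicCube n j z').indicator g x ∂σ :=
        (lintegral_tsum hmeas).symm
    _ ≤ ∫⁻ x, 3^n * g x ∂σ := by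
        refine lintegral_mono fun x => ?_
        set F : Finset (Fin n → ℤ) :=
          Fintype.piFinset fun i => Finset.Icc (zidx j x i - 1) (zidx j x i + 1) with hF
        have hsupp : ∀ z' ∉ F, (tripleDyadicCube n j z').indicator g x = 0 := by
          intro z' hz'
          rw [Set.indicator_of_notMem]
          intro hx
          apply hz'
          rw [hF, Fintype.mem_piFinset]
          intro i
          rw [Finset.mem_Icc]
          exact ⟨(mem_triple_iff.1 hx i).1, (mem_triple_iff.1 hx i).2⟩
        rw [tsum_eq_sum hsupp]
        calc ∑ z' ∈ F, (tripleDyadicCube n j z').indicator g x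
            ≤ ∑ _z' ∈ F, g x := Finset.sum_le_sum fun z' _ => Set.indicator_le_self _ _ _
          _ = F.card * g x := by rw [Finset.sum_const, nsmul_eq_mul]
          _ ≤ 3^n * g x := by
              apply mul_le_mul_left
              have : F.card = 3^n := by
                rw [hF, Fintype.card_piFinset]
                have : ∀ i, (Finset.Icc (zidx j x i - 1) (zidx j x i + 1)).card = 3 := by
                  intro i; rw [Int.card_Icc]; omega
                simp [this]
              rw [this]
              norm_num
    _ = 3^n * ∫⁻ x, g x ∂σ := by
        rw [lintegral_const_mul _ hg]

lemma const_bound {n : ℕ} (hn : 0 < n) (α : ℝ) (hα0 : 0 ≤ α) (hαn : α < n) :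
    ∃ C₀ : ℝ≥0∞, C₀ ≠ ⊤ ∧ ∀ (k j : ℤ), k - 1 ≤ j → ∀ x : EuclideanSpace ℝ (Fin n),
      ((volume (Metric.ball x ((2:ℝ)^(-k)))) ^ (α/(n:ℝ) - 1))^2 *
        ENNReal.ofReal (((2:ℝ)^(-(j:ℝ)))^(2*((n:ℝ)-α))) ≤ C₀ := by
  haveI : Nonempty (Fin n) := ⟨⟨0, hn⟩⟩
  set γ : ℝ := α/(n:ℝ) - 1 with hγ
  set c : ℝ := Real.sqrt Real.pi ^ n / Real.Gamma ((n:ℝ)/2+1) with hc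
  have hcpos : 0 < c := by
    apply div_pos (pow_pos (Real.sqrt_pos.2 Real.pi_pos) n)
    apply Real.Gamma_pos_of_pos; positivity
  refine ⟨ENNReal.ofReal (c^(2*γ) * (2:ℝ)^(2*((n:ℝ)-α))), ENNReal.ofReal_ne_top, ?_⟩
  intro k j hkj x
  set r : ℝ := (2:ℝ)^(-k) with hr
  have hrpos : 0 < r := by positivity
  have hV : volume (Metric.ball x r) = ENNReal.ofReal (r^n * c) := by
    rw [EuclideanSpace.volume_ball]
    rw [← ENNReal.ofReal_pow hrpos.le, ← ENNReal.ofReal_mul (by positivity)]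
    congr 2 <;> rw [Fintype.card_fin]
  have hne : (n:ℝ) ≠ 0 := Nat.cast_ne_zero.2 hn.ne'
  have hrnγ : ((r^n * c) : ℝ)^γ = r^(α-(n:ℝ)) * c^γ := by
    rw [Real.mul_rpow (by positivity) hcpos.le]
    congr 1
    rw [← Real.rpow_natCast r n, ← Real.rpow_mul hrpos.le]
    congr 1
    rw [hγ, mul_sub, mul_one, mul_div_assoc', mul_div_cancel_left₀ _ hne]
  have hLHS : ((volume (Metric.ball x r)) ^ γ)^2 *
      ENNReal.ofReal (((2:ℝ)^(-(j:ℝ)))^(2*((n:ℝ)-α)))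
      = ENNReal.ofReal ((r^(α-(n:ℝ)) * c^γ)^2 * ((2:ℝ)^(-(j:ℝ)))^(2*((n:ℝ)-α))) := by
    rw [hV, ENNReal.ofReal_rpow_of_pos (by positivity), hrnγ,
      ← ENNReal.ofReal_pow (by positivity), ← ENNReal.ofReal_mul (by positivity)]
  rw [hLHS]
  apply ENNReal.ofReal_le_ofReal
  -- real inequality
  have hrrpow : r = (2:ℝ)^(-(k:ℝ)) := by
    rw [hr, ← Real.rpow_intCast (2:ℝ) (-k)]
    congr 1; push_cast; ring
  have hj : ((2:ℝ)^(-(j:ℝ)))^(2*((n:ℝ)-α)) ≤ (2*r)^(2*((n:ℝ)-α)) := by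
    apply Real.rpow_le_rpow (by positivity) _ (by linarith)
    have h2r : (2:ℝ)*r = (2:ℝ)^(1 + -(k:ℝ)) := by
      rw [Real.rpow_add (by norm_num : (0:ℝ) < 2), Real.rpow_one, hrrpow]
    rw [h2r]
    apply Real.rpow_le_rpow_of_exponent_le (by norm_num)
    have : (k:ℝ) - 1 ≤ (j:ℝ) := by exact_mod_cast hkj
    linarith
  calc (r^(α-(n:ℝ)) * c^γ)^2 * ((2:ℝ)^(-(j:ℝ)))^(2*((n:ℝ)-α))
      ≤ (r^(α-(n:ℝ)) * c^γ)^2 * (2*r)^(2*((n:ℝ)-α)) := by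
        apply mul_le_mul_of_nonneg_left hj (by positivity)
    _ = (r^(α-(n:ℝ)))^2 * (c^γ)^2 * ((2:ℝ)^(2*((n:ℝ)-α)) * r^(2*((n:ℝ)-α))) := by
        rw [mul_pow, Real.mul_rpow (by norm_num) hrpos.le]
    _ = c^(2*γ) * (2:ℝ)^(2*((n:ℝ)-α)) * (r^(α-(n:ℝ)) * r^(α-(n:ℝ)) * r^(2*((n:ℝ)-α))) := by
        rw [sq (r^(α-(n:ℝ))), sq (c^γ), ← Real.rpow_add hcpos]
        ring_nf
    _ = c^(2*γ) * (2:ℝ)^(2*((n:ℝ)-α)) := by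
        rw [← Real.rpow_add hrpos, ← Real.rpow_add hrpos,
          show α-(n:ℝ)+(α-(n:ℝ))+2*((n:ℝ)-α) = 0 by ring, Real.rpow_zero, mul_one]

noncomputable def nbFinset {n : ℕ} (z' : Fin n → ℤ) : Finset (Fin n → ℤ) :=
  (Fintype.piFinset fun i => Finset.Icc (z' i - 1) (z' i + 1)).erase z'

lemma mem_nbFinset {n : ℕ} {z z' : Fin n → ℤ} :
    z ∈ nbFinset z' ↔ z ≠ z' ∧ ∀ i, |z i - z' i| ≤ 1 := by
  simp only [nbFinset, Finset.mem_erase, Fintype.mem_piFinset, Finset.mem_Icc]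
  constructor
  · rintro ⟨h1, h2⟩; exact ⟨h1, fun i => abs_le.2 (by have := h2 i; omega)⟩
  · rintro ⟨h1, h2⟩; exact ⟨h1, fun i => by have := abs_le.1 (h2 i); omega⟩

lemma card_nbFinset_le {n : ℕ} (z' : Fin n → ℤ) : (nbFinset z').card ≤ 3^n := by
  calc (nbFinset z').card ≤ (Fintype.piFinset fun i => Finset.Icc (z' i - 1) (z' i + 1)).card :=
        Finset.card_erase_le.trans (by omega)
    _ = 3^n := by
        rw [Fintype.card_piFinset]
        have : ∀ i : Fin n, (Finset.Icc (z' i - 1) (z' i + 1)).card = 3 := by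
          intro i; rw [Int.card_Icc]; omega
        simp [this]

/-- the per-generation estimate -/

lemma gen_bound {n : ℕ} (j : ℤ) (σ ω : Measure (EuclideanSpace ℝ (Fin n)))
    (f : EuclideanSpace ℝ (Fin n) → ℝ≥0∞) (hf : Measurable f) (R : ℝ≥0∞)
    (hA : ∀ z z' : Fin n → ℤ, z ≠ z' → (∀ i, |z i - z' i| ≤ 1) →
      σ (dyadicCube n j z) * ω (dyadicCube n j z') ≤ R) :
    ∫⁻ x, (∑ z ∈ nbFinset (zidx j x), ∫⁻ y in dyadicCube n j z, f y ∂σ)^2 ∂ω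
      ≤ 2 * 3^n * 3^n * R * ∫⁻ y, (f y)^2 ∂σ := by
  set T : (Fin n → ℤ) → ℝ≥0∞ :=
    fun z' => ∑ z ∈ nbFinset z', ∫⁻ y in dyadicCube n j z, f y ∂σ with hT
  have huniv : (Set.univ : Set (EuclideanSpace ℝ (Fin n))) = ⋃ z', dyadicCube n j z' :=
    Set.eq_univ_of_forall (fun x => Set.mem_iUnion.2 ⟨zidx j x, mem_dyadicCube_zidx j x⟩) |>.symm
  have hdisj : Pairwise (Function.onFun Disjoint fun z' => dyadicCube n j z') :=
    fun z₁ z₂ h => dyadicCube_disjoint h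
  calc ∫⁻ x, (T (zidx j x))^2 ∂ω
      = ∫⁻ x in ⋃ z', dyadicCube n j z', (T (zidx j x))^2 ∂ω := by
        rw [← huniv, Measure.restrict_univ]
    _ = ∑' z', ∫⁻ x in dyadicCube n j z', (T (zidx j x))^2 ∂ω :=
        lintegral_iUnion (fun z' => measurableSet_dyadicCube j z') hdisj _
    _ = ∑' z', (T z')^2 * ω (dyadicCube n j z') := by
        refine tsum_congr fun z' => ?_
        rw [setLIntegral_congr_fun (measurableSet_dyadicCube j z')
          (fun x hx => by rw [← eq_zidx_of_mem hx])]
        exact setLIntegral_const _ _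
    _ ≤ ∑' z', (2 * 3^n) * R * ∫⁻ y in tripleDyadicCube n j z', (f y)^2 ∂σ := by
        refine ENNReal.tsum_le_tsum fun z' => ?_
        calc (T z')^2 * ω (dyadicCube n j z')
            ≤ ((2 * (nbFinset z').card) * ∑ z ∈ nbFinset z',
                (∫⁻ y in dyadicCube n j z, f y ∂σ)^2) * ω (dyadicCube n j z') :=
              mul_le_mul_left (ennreal_sq_sum_le _ _) _
          _ ≤ ((2 * 3^n) * ∑ z ∈ nbFinset z',
                (∫⁻ y in dyadicCube n j z, f y ∂σ)^2) * ω (dyadicCube n j z') := by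
              gcongr
              exact_mod_cast card_nbFinset_le z'
          _ = (2 * 3^n) * ∑ z ∈ nbFinset z',
                ((∫⁻ y in dyadicCube n j z, f y ∂σ)^2 * ω (dyadicCube n j z')) := by
              rw [mul_assoc, Finset.sum_mul]
          _ ≤ (2 * 3^n) * ∑ z ∈ nbFinset z',
                R * ∫⁻ y in dyadicCube n j z, (f y)^2 ∂σ := by
              apply mul_le_mul_right
              refine Finset.sum_le_sum fun z hz => ?_
              rw [mem_nbFinset] at hz
              calc (∫⁻ y in dyadicCube n j z, f y ∂σ)^2 * ω (dyadicCube n j z')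
                  ≤ (σ (dyadicCube n j z) * ∫⁻ y in dyadicCube n j z, (f y)^2 ∂σ) *
                      ω (dyadicCube n j z') :=
                    mul_le_mul_left (lintegral_sq_le_measure_mul σ
                      (measurableSet_dyadicCube j z) hf) _
                _ = (σ (dyadicCube n j z) * ω (dyadicCube n j z')) *
                      ∫⁻ y in dyadicCube n j z, (f y)^2 ∂σ := by ring
                _ ≤ R * ∫⁻ y in dyadicCube n j z, (f y)^2 ∂σ :=
                    mul_le_mul_left (hA z z' hz.1 hz.2) _
          _ = (2 * 3^n) * R * ∑ z ∈ nbFinset z', ∫⁻ y in dyadicCube n j z, (f y)^2 ∂σ := by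
              rw [Finset.mul_sum, Finset.mul_sum]
              exact Finset.sum_congr rfl fun z _ => by ring
          _ ≤ (2 * 3^n) * R * ∫⁻ y in tripleDyadicCube n j z', (f y)^2 ∂σ := by
              apply mul_le_mul_right
              have hd : Set.PairwiseDisjoint (↑(nbFinset z')) (fun z => dyadicCube n j z) :=
                fun a _ b _ hab => dyadicCube_disjoint hab
              rw [← lintegral_biUnion_finset hd (fun z _ => measurableSet_dyadicCube j z)]
              apply lintegral_mono_set
              refine Set.iUnion₂_subset fun z hz => ?_
              rw [mem_nbFinset] at hz
              exact cube_subset_triple hz.2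
    _ = (2 * 3^n) * R * ∑' z', ∫⁻ y in tripleDyadicCube n j z', (f y)^2 ∂σ := by
        rw [ENNReal.tsum_mul_left]
    _ ≤ (2 * 3^n) * R * (3^n * ∫⁻ y, (f y)^2 ∂σ) := by
        apply mul_le_mul_right
        exact tsum_triple_lintegral_le j σ _ (hf.pow_const 2)
    _ = 2 * 3^n * 3^n * R * ∫⁻ y, (f y)^2 ∂σ := by ring

lemma measurable_comp_zidx {n : ℕ} (j : ℤ) (T : (Fin n → ℤ) → ℝ≥0∞) :
    Measurable (fun x : EuclideanSpace ℝ (Fin n) => T (zidx j x)) := by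
  have heq : (fun x : EuclideanSpace ℝ (Fin n) => T (zidx j x))
      = fun x => ∑' z' : Fin n → ℤ, (dyadicCube n j z').indicator (fun _ => T z') x := by
    funext x
    rw [tsum_eq_single (zidx j x)]
    · rw [Set.indicator_of_mem (mem_dyadicCube_zidx j x)]
    · intro z' hz'
      exact Set.indicator_of_notMem (fun hx => hz' (eq_zidx_of_mem hx)) _
  rw [heq]
  exact Measurable.ennreal_tsum fun z' =>
    measurable_const.indicator (measurableSet_dyadicCube j z')

lemma annulus_le {n : ℕ} (hn : 0 < n) (k : ℤ) (σ : Measure (EuclideanSpace ℝ (Fin n)))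
    (f : EuclideanSpace ℝ (Fin n) → ℝ≥0∞) (hf : Measurable f)
    (x : EuclideanSpace ℝ (Fin n)) :
    ∫⁻ y in Metric.ball x ((2:ℝ)^(-k)) \ Metric.ball x ((2:ℝ)^(-k)/2), f y ∂σ
      ≤ ∑ j ∈ Finset.Icc (k-1) (k+(n:ℤ)+1),
          ∑ z ∈ nbFinset (zidx j x), ∫⁻ y in dyadicCube n j z, f y ∂σ := by
  have hann : MeasurableSet (Metric.ball x ((2:ℝ)^(-k)) \ Metric.ball x ((2:ℝ)^(-k)/2)) :=
    measurableSet_ball.diff measurableSet_ball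
  rw [← lintegral_indicator hann]
  calc ∫⁻ y, (Metric.ball x ((2:ℝ)^(-k)) \ Metric.ball x ((2:ℝ)^(-k)/2)).indicator f y ∂σ
      ≤ ∫⁻ y, ∑ j ∈ Finset.Icc (k-1) (k+(n:ℤ)+1),
          ∑ z ∈ nbFinset (zidx j x), (dyadicCube n j z).indicator f y ∂σ := by
        refine lintegral_mono fun y => ?_
        by_cases hy : y ∈ Metric.ball x ((2:ℝ)^(-k)) \ Metric.ball x ((2:ℝ)^(-k)/2)
        · rw [Set.indicator_of_mem hy]
          obtain ⟨hy1, hy2⟩ := hy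
          rw [Metric.mem_ball] at hy1
          rw [Metric.mem_ball, not_lt] at hy2
          obtain ⟨j, hjmem, hne, hclose⟩ := covering hn k x y (by linarith) hy1
          calc f y = (dyadicCube n j (zidx j y)).indicator f y := by
                rw [Set.indicator_of_mem (mem_dyadicCube_zidx j y)]
            _ ≤ ∑ z ∈ nbFinset (zidx j x), (dyadicCube n j z).indicator f y := by
                refine Finset.single_le_sum (f := fun z => (dyadicCube n j z).indicator f y)
                  (fun _ _ => zero_le) ?_
                rw [mem_nbFinset]; exact ⟨hne, hclose⟩
            _ ≤ _ := Finset.single_le_sum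
                  (f := fun j' => ∑ z ∈ nbFinset (zidx j' x), (dyadicCube n j' z).indicator f y)
                  (fun _ _ => zero_le) hjmem
        · rw [Set.indicator_of_notMem hy]; exact zero_le
    _ = ∑ j ∈ Finset.Icc (k-1) (k+(n:ℤ)+1),
          ∑ z ∈ nbFinset (zidx j x), ∫⁻ y in dyadicCube n j z, f y ∂σ := by
        rw [lintegral_finset_sum]
        · refine Finset.sum_congr rfl fun j _ => ?_
          rw [lintegral_finset_sum]
          · exact Finset.sum_congr rfl fun z _ => lintegral_indicator (measurableSet_dyadicCube j z) f
          · exact fun z _ => hf.indicator (measurableSet_dyadicCube j z)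
        · exact fun j _ => Finset.measurable_sum _ fun z _ =>
            hf.indicator (measurableSet_dyadicCube j z)

/-- If the offset Muckenhoupt constant `A₂^α` of `(σ,ω)` is finite, then each
annular averaging operator `A_α^k` is bounded from `L²(σ)` to `L²(ω)` with norm
`≲ √(A₂^α)`, uniformly in `k`. -/theorem annular_operator_bound {n : ℕ} (hn : 0 < n) (α : ℝ) (hα0 : 0 ≤ α) (hαn : α < n) :
    ∃ C : ℝ≥0∞, C ≠ ⊤ ∧
      ∀ (σ ω : Measure (EuclideanSpace ℝ (Fin n))),
        IsLocallyFiniteMeasure σ → IsLocallyFiniteMeasure ω →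
        ∀ A : ℝ≥0∞,
          (∀ (k : ℤ) (z z' : Fin n → ℤ), NeighbourCubes n k z z' →
            σ (dyadicCube n k z) * ω (dyadicCube n k z') ≤
              A * ENNReal.ofReal (((2 : ℝ) ^ (-(k : ℝ))) ^ (2 * ((n : ℝ) - α)))) →
          ∀ (k : ℤ) (f : EuclideanSpace ℝ (Fin n) → ℝ≥0∞), Measurable f →
            ∫⁻ x, (annularOp σ α k f x) ^ 2 ∂ω ≤ C * A * ∫⁻ y, (f y) ^ 2 ∂σ := by
  obtain ⟨C₀, hC₀top, hC₀⟩ := const_bound hn α hα0 hαn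
  refine ⟨2 * (n+3) * ((n+3) * (2 * 3^n * 3^n * C₀)), ?_, ?_⟩
  · refine ENNReal.mul_ne_top (ENNReal.mul_ne_top (by simp) (by simp)) ?_
    refine ENNReal.mul_ne_top (by simp) ?_
    exact ENNReal.mul_ne_top (ENNReal.mul_ne_top (ENNReal.mul_ne_top (by simp) (by simp)) (by simp)) hC₀top
  intro σ ω _ _ A hA k f hf
  set J : Finset ℤ := Finset.Icc (k-1) (k+(n:ℤ)+1) with hJdef
  have hJcard : (J.card : ℝ≥0∞) = ((n:ℝ≥0∞)+3) := by
    rw [hJdef, Int.card_Icc, show k+(n:ℤ)+1+1-(k-1) = (n:ℤ)+3 by ring,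
      show ((n:ℤ)+3).toNat = n+3 by omega]
    push_cast
    ring
  set c₀ : ℝ≥0∞ := (volume (Metric.ball (0 : EuclideanSpace ℝ (Fin n)) ((2:ℝ)^(-k)))) ^ (α/(n:ℝ) - 1) with hc₀
  have hc₀top : c₀ ≠ ⊤ := by
    intro h
    rw [hc₀] at h
    rcases ENNReal.rpow_eq_top_iff.1 h with ⟨h0, _⟩ | ⟨ht, _⟩
    · exact (Metric.measure_ball_pos volume _ (by positivity : (0:ℝ) < (2:ℝ)^(-k))).ne' h0
    · exact (measure_ball_lt_top).ne ht
  set S : ℤ → EuclideanSpace ℝ (Fin n) → ℝ≥0∞ :=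
    fun j x => ∑ z ∈ nbFinset (zidx j x), ∫⁻ y in dyadicCube n j z, f y ∂σ with hSdef
  have hSmeas : ∀ j : ℤ, Measurable (fun x => (S j x)^2) := by
    intro j
    exact (measurable_comp_zidx j
      (fun z' => ∑ z ∈ nbFinset z', ∫⁻ y in dyadicCube n j z, f y ∂σ)).pow_const 2
  set R : ℤ → ℝ≥0∞ := fun j => ENNReal.ofReal (((2:ℝ)^(-(j:ℝ)))^(2*((n:ℝ)-α))) with hRdef
  have hpoint : ∀ x, annularOp σ α k f x ≤ c₀ * ∑ j ∈ J, S j x := by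
    intro x
    rw [annularOp, Measure.addHaar_ball_center volume x]
    exact mul_le_mul_right (annulus_le hn k σ f hf x) _
  calc ∫⁻ x, (annularOp σ α k f x) ^ 2 ∂ω
      ≤ ∫⁻ x, (c₀ * ∑ j ∈ J, S j x)^2 ∂ω := by
        refine lintegral_mono fun x => ?_
        exact pow_le_pow_left' (hpoint x) 2
    _ = ∫⁻ x, c₀^2 * (∑ j ∈ J, S j x)^2 ∂ω := by
        refine lintegral_congr fun x => ?_; rw [mul_pow]
    _ ≤ ∫⁻ x, c₀^2 * ((2 * (n+3)) * ∑ j ∈ J, (S j x)^2) ∂ω := by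
        refine lintegral_mono fun x => mul_le_mul_right ?_ _
        calc (∑ j ∈ J, S j x)^2 ≤ (2 * J.card) * ∑ j ∈ J, (S j x)^2 := ennreal_sq_sum_le _ _
          _ = (2 * ((n:ℝ≥0∞)+3)) * ∑ j ∈ J, (S j x)^2 := by rw [hJcard]
          _ = (2 * (n+3)) * ∑ j ∈ J, (S j x)^2 := rfl
    _ = c₀^2 * ((2 * (n+3)) * ∑ j ∈ J, ∫⁻ x, (S j x)^2 ∂ω) := by
        rw [lintegral_const_mul' _ _ (by exact ENNReal.pow_ne_top hc₀top)]
        congr 1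
        rw [lintegral_const_mul' _ _ (by
          exact ENNReal.mul_ne_top (by simp) (by simp))]
        congr 1
        exact lintegral_finset_sum _ (fun j _ => hSmeas j)
    _ ≤ c₀^2 * ((2 * (n+3)) * ∑ j ∈ J, 2 * 3^n * 3^n * (A * R j) * ∫⁻ y, (f y)^2 ∂σ) := by
        refine mul_le_mul_right (mul_le_mul_right (Finset.sum_le_sum fun j _ => ?_) _) _
        refine gen_bound j σ ω f hf (A * R j) ?_
        intro z z' hne hclose
        exact hA j z z' (neighbourCubes_of_close hne hclose)
    _ ≤ 2 * (n+3) * ((n+3) * (2 * 3^n * 3^n * C₀)) * A * ∫⁻ y, (f y)^2 ∂σ := by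
        have hterm : ∀ j ∈ J, c₀^2 * (2 * 3^n * 3^n * (A * R j)) ≤
            (2 * 3^n * 3^n * C₀) * A := by
          intro j hj
          have hkj : k - 1 ≤ j := (Finset.mem_Icc.1 hj).1
          have := hC₀ k j hkj (0 : EuclideanSpace ℝ (Fin n))
          calc c₀^2 * (2 * 3^n * 3^n * (A * R j))
              = (2 * 3^n * 3^n) * A * (c₀^2 * R j) := by ring
            _ ≤ (2 * 3^n * 3^n) * A * C₀ := mul_le_mul_right this _
            _ = (2 * 3^n * 3^n * C₀) * A := by ring
        calc c₀^2 * ((2 * (n+3)) * ∑ j ∈ J, 2 * 3^n * 3^n * (A * R j) * ∫⁻ y, (f y)^2 ∂σ)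
            = (2 * (n+3)) * ∑ j ∈ J, (c₀^2 * (2 * 3^n * 3^n * (A * R j))) * ∫⁻ y, (f y)^2 ∂σ := by
              rw [Finset.mul_sum, Finset.mul_sum, Finset.mul_sum]
              exact Finset.sum_congr rfl fun j _ => by ring
          _ ≤ (2 * (n+3)) * ∑ j ∈ J, ((2 * 3^n * 3^n * C₀) * A) * ∫⁻ y, (f y)^2 ∂σ := by
              refine mul_le_mul_right (Finset.sum_le_sum fun j hj => ?_) _
              exact mul_le_mul_left (hterm j hj) _
          _ = (2 * (n+3)) * (J.card * (((2 * 3^n * 3^n * C₀) * A) * ∫⁻ y, (f y)^2 ∂σ)) := by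
              rw [Finset.sum_const, nsmul_eq_mul]
          _ = 2 * (n+3) * ((n+3) * (2 * 3^n * 3^n * C₀)) * A * ∫⁻ y, (f y)^2 ∂σ := by
              rw [hJcard]; ring
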